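/- Let k ≥ 1, m ≥ 2, let w* ∈ ℝ^m be nonzero, and let 0 < λ < 1. If w_t ≠ 0 and π/2 < θ_t < π, then the gradient descent iterate w_{t+1} = w_t − λ·G(w_t) satisfies ‖w_{t+1}‖ ≥ (sin θ_t / sin θ_{t+1}) · min{ ‖w_t‖, ‖w*‖·sin θ_t / (α(k)·π) }. -/

import Mathlib

open scoped RealInnerProductSpace
open InnerProductGeometry Real Classical

/-- The ReLU function `σ(z) = max{z, 0}`. -/
noncomputable def relu (z : ℝ) : ℝ := max z 0

/-- `g u v = (1/(2π))·‖u‖·‖v‖·(sin θ_{u,v} + (π − θ_{u,v})·cos θ_{u,v})`. -/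
noncomputable def g {E : Type*} [NormedAddCommGroup E] [InnerProductSpace ℝ E]
    (u v : E) : ℝ :=
  (1 / (2 * π)) * ‖u‖ * ‖v‖ *
    (Real.sin (angle u v) + (π - angle u v) * Real.cos (angle u v))

/-- The no-overlap population loss
`ℓ(w) = (1/k²)·(γ‖w‖² − 2k·g(w,w*) − 2β‖w‖‖w*‖ + γ‖w*‖²)`,
where `β = (k²−k)/(2π)` and `γ = β + k/2`. -/
noncomputable def nol {m : ℕ} (k : ℕ) (ws : EuclideanSpace ℝ (Fin m))
    (w : EuclideanSpace ℝ (Fin m)) : ℝ :=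
  (1 / (k : ℝ) ^ 2) *
    (((((k : ℝ) ^ 2 - k) / (2 * π)) + (k : ℝ) / 2) * ‖w‖ ^ 2
      - 2 * (k : ℝ) * g w ws
      - 2 * (((k : ℝ) ^ 2 - k) / (2 * π)) * ‖w‖ * ‖ws‖
      + ((((k : ℝ) ^ 2 - k) / (2 * π)) + (k : ℝ) / 2) * ‖ws‖ ^ 2)

/-- The gradient of the no-overlap population loss: `G(0) = 0` and, for `w ≠ 0`,
`G(w) = (1/k²)·[(k + (k²−k)/π − (k‖w*‖ sin θ_{w,w*})/(π‖w‖) − ((k²−k)‖w*‖)/(π‖w‖))·w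
        − (k/π)·(π − θ_{w,w*})·w*]`. -/
noncomputable def nG {m : ℕ} (k : ℕ) (ws : EuclideanSpace ℝ (Fin m))
    (w : EuclideanSpace ℝ (Fin m)) : EuclideanSpace ℝ (Fin m) :=
  if w = 0 then 0 else
    (1 / (k : ℝ) ^ 2) •
      ((((k : ℝ) + ((k : ℝ) ^ 2 - k) / π
          - ((k : ℝ) * ‖ws‖ * Real.sin (angle w ws)) / (π * ‖w‖)
          - (((k : ℝ) ^ 2 - k) * ‖ws‖) / (π * ‖w‖)) • w)
        - (((k : ℝ) / π) * (π - angle w ws)) • ws)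

/-- `α(k) = 1/k + (k²−k)/(πk²)`. -/
noncomputable def alphac (k : ℕ) : ℝ := 1 / (k : ℝ) + ((k : ℝ) ^ 2 - k) / (π * (k : ℝ) ^ 2)

/-- If `w_t ≠ 0`, `π/2 < θ_t < π` and `0 < λ < 1`, then the gradient descent iterate
`w_{t+1} = w_t − λ·G(w_t)` satisfies
`‖w_{t+1}‖ ≥ (sin θ_t / sin θ_{t+1}) · min {‖w_t‖, ‖w*‖ sin θ_t / (α(k)π)}`. -/

lemma key_scalar (K s r lam : ℝ) (hK : 1 ≤ K) (hs0 : 0 < s) (hs1 : s ≤ 1)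
    (hr : 0 < r) (hl0 : 0 < lam) (hl1 : lam < 1) :
    min 1 (s * r / (1/K + (K^2-K)/(π*K^2))) ≤
      1 - lam * ((1/K^2) * (K + (K^2-K)/π - K*s*r - (K^2-K)*r)) := by
  have hπ : (0:ℝ) < π := Real.pi_pos
  have hπ1 : (1:ℝ) ≤ π := by nlinarith [Real.pi_gt_three]
  have hK0 : (0:ℝ) < K := by linarith
  have hK2 : (0:ℝ) < K^2 := by positivity
  have hKK : (0:ℝ) ≤ K^2 - K := by nlinarith
  set α : ℝ := 1/K + (K^2-K)/(π*K^2) with hα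
  set c : ℝ := (1/K^2) * (K + (K^2-K)/π - K*s*r - (K^2-K)*r) with hc
  have hα0 : 0 < α := by
    have h1 : (0:ℝ) ≤ (K^2-K)/(π*K^2) := by positivity
    have h2 : (0:ℝ) < 1/K := by positivity
    rw [hα]; linarith
  have hα1 : α ≤ 1 := by
    rw [hα, div_add_div _ _ (ne_of_gt hK0) (by positivity : π*K^2 ≠ 0),
      div_le_one (by positivity)]
    nlinarith [mul_nonneg (by linarith : (0:ℝ) ≤ π - 1) (mul_nonneg hK0.le (by linarith : (0:ℝ) ≤ K - 1))]
  have hαc : α - c = (1/K^2) * (K*s*r + (K^2-K)*r) := by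
    rw [hα, hc]; field_simp; ring
  have h1 : s*r ≤ α - c := by
    rw [hαc, one_div, inv_mul_eq_div, le_div_iff₀ hK2]
    nlinarith [mul_nonneg (mul_nonneg hKK hr.le) (by linarith : (0:ℝ) ≤ 1 - s)]
  rcases le_or_gt c 0 with hcc | hcc
  · have : lam * c ≤ 0 := mul_nonpos_of_nonneg_of_nonpos hl0.le hcc
    calc min 1 (s*r/α) ≤ 1 := min_le_left _ _
      _ ≤ 1 - lam * c := by linarith
  · have h3 : 1 - α + s*r ≤ 1 - lam*c := by nlinarith
    rcases le_or_gt α (s*r) with hx | hx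
    · calc min 1 (s*r/α) ≤ 1 := min_le_left _ _
        _ ≤ 1 - lam * c := by linarith
    · have h4 : s*r/α ≤ 1 - α + s*r := by
        rw [div_le_iff₀ hα0]
        nlinarith [mul_nonneg (by linarith : (0:ℝ) ≤ 1-α) (by linarith : (0:ℝ) ≤ α - s*r)]
      calc min 1 (s*r/α) ≤ s*r/α := min_le_right _ _
        _ ≤ 1 - lam * c := le_trans h4 h3

lemma sin_angle_combo {E : Type*} [NormedAddCommGroup E] [InnerProductSpace ℝ E]
    (wt ws : E) (hws : ws ≠ 0) (a b : ℝ) :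
    Real.sin (angle (a • wt + b • ws) ws) * ‖a • wt + b • ws‖
      = |a| * (Real.sin (angle wt ws) * ‖wt‖) := by
  have hws0 : (0:ℝ) < ‖ws‖ := norm_pos_iff.2 hws
  have h1 := sin_angle_mul_norm_mul_norm (a • wt + b • ws) ws
  have h2 := sin_angle_mul_norm_mul_norm wt ws
  have hexp : ⟪a•wt+b•ws, a•wt+b•ws⟫ * ⟪ws,ws⟫ - ⟪a•wt+b•ws, ws⟫*⟪a•wt+b•ws, ws⟫
      = a^2 * (⟪wt,wt⟫*⟪ws,ws⟫ - ⟪wt,ws⟫*⟪wt,ws⟫) := by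
    simp only [inner_add_left, inner_add_right, real_inner_smul_left, real_inner_smul_right,
      real_inner_comm ws wt]
    ring
  have hsq : √(⟪a•wt+b•ws, a•wt+b•ws⟫ * ⟪ws,ws⟫ - ⟪a•wt+b•ws, ws⟫*⟪a•wt+b•ws, ws⟫)
      = |a| * √(⟪wt,wt⟫*⟪ws,ws⟫ - ⟪wt,ws⟫*⟪wt,ws⟫) := by
    rw [hexp, Real.sqrt_mul (sq_nonneg a), Real.sqrt_sq_eq_abs]
  have : Real.sin (angle (a • wt + b • ws) ws) * (‖a • wt + b • ws‖ * ‖ws‖)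
      = |a| * (Real.sin (angle wt ws) * (‖wt‖ * ‖ws‖)) := by
    rw [h1, h2, hsq]
  have := mul_right_cancel₀ (ne_of_gt hws0) (by linarith [this] : Real.sin (angle (a • wt + b • ws) ws) * ‖a • wt + b • ws‖ * ‖ws‖ = |a| * (Real.sin (angle wt ws) * ‖wt‖) * ‖ws‖)
  exact this

theorem stmt10 (k m : ℕ) (hk : 1 ≤ k) (hm : 2 ≤ m)
    (ws : EuclideanSpace ℝ (Fin m)) (hws : ws ≠ 0)
    (lam : ℝ) (hlam0 : 0 < lam) (hlam1 : lam < 1)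
    (wt : EuclideanSpace ℝ (Fin m)) (hwt : wt ≠ 0)
    (hθ0 : π / 2 < angle wt ws) (hθπ : angle wt ws < π) :
    (Real.sin (angle wt ws) / Real.sin (angle (wt - lam • nG k ws wt) ws)) *
        min ‖wt‖ (‖ws‖ * Real.sin (angle wt ws) / (alphac k * π)) ≤
      ‖wt - lam • nG k ws wt‖ := by
  have hπ : (0:ℝ) < π := Real.pi_pos
  have hK : (1:ℝ) ≤ (k:ℝ) := by exact_mod_cast hk
  have hK0 : (0:ℝ) < (k:ℝ) := by linarith
  have hwt0 : (0:ℝ) < ‖wt‖ := norm_pos_iff.2 hwt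
  have hws0 : (0:ℝ) < ‖ws‖ := norm_pos_iff.2 hws
  set θ : ℝ := angle wt ws with hθ
  set s : ℝ := Real.sin θ with hs
  have hs0 : 0 < s := Real.sin_pos_of_pos_of_lt_pi (by linarith) hθπ
  have hs1 : s ≤ 1 := Real.sin_le_one θ
  set K : ℝ := (k:ℝ) with hKdef
  set a : ℝ := 1 - lam * ((1/K^2) * (K + (K^2-K)/π - (K*‖ws‖*s)/(π*‖wt‖) - ((K^2-K)*‖ws‖)/(π*‖wt‖))) with ha
  set b : ℝ := lam * ((1/K^2) * ((K/π) * (π - θ))) with hb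
  have hW : wt - lam • nG k ws wt = a • wt + b • ws := by
    simp only [nG, if_neg hwt, ha, hb, ← hθ, ← hs]
    match_scalars <;> ring
  rw [hW]
  by_cases h0 : Real.sin (angle (a • wt + b • ws) ws) = 0
  · rw [h0, div_zero, zero_mul]; exact norm_nonneg _
  have hsp : 0 < Real.sin (angle (a • wt + b • ws) ws) :=
    lt_of_le_of_ne (Real.sin_nonneg_of_nonneg_of_le_pi (angle_nonneg _ _) (angle_le_pi _ _))
      (Ne.symm h0)
  rw [div_mul_eq_mul_div, div_le_iff₀ hsp]
  have hcombo := sin_angle_combo wt ws hws a b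
  -- key scalar inequality
  set r : ℝ := ‖ws‖/(π*‖wt‖) with hr
  have hr0 : 0 < r := by positivity
  have hkey := key_scalar K s r lam hK hs0 hs1 hr0 hlam0 hlam1
  have hrhs : 1 - lam * ((1/K^2) * (K + (K^2-K)/π - K*s*r - (K^2-K)*r)) = a := by
    rw [ha, hr]; ring
  have hα : 1/K + (K^2-K)/(π*K^2) = alphac k := rfl
  rw [hrhs, hα] at hkey
  have hα0 : 0 < alphac k := by
    have h1 : (0:ℝ) ≤ (K^2-K)/(π*K^2) := by
      apply div_nonneg _ (by positivity); nlinarith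
    have h2 : (0:ℝ) < 1/K := by positivity
    have h3 : alphac k = 1/K + (K^2-K)/(π*K^2) := rfl
    rw [h3]; linarith
  have hmineq : ‖ws‖ * s / (alphac k * π) = (s * r / alphac k) * ‖wt‖ := by
    rw [hr]; field_simp
  clear_value θ s K a b r
  have hmin : min ‖wt‖ (‖ws‖ * s / (alphac k * π)) ≤ a * ‖wt‖ := by
    rw [hmineq]
    rcases min_cases (1:ℝ) (s * r / alphac k) with ⟨h1, h2⟩ | ⟨h1, h2⟩
    · rw [h1] at hkey
      calc min ‖wt‖ ((s * r / alphac k) * ‖wt‖) ≤ ‖wt‖ := min_le_left _ _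
        _ ≤ a * ‖wt‖ := le_mul_of_one_le_left hwt0.le hkey
    · rw [h1] at hkey
      calc min ‖wt‖ ((s * r / alphac k) * ‖wt‖) ≤ (s * r / alphac k) * ‖wt‖ := min_le_right _ _
        _ ≤ a * ‖wt‖ := mul_le_mul_of_nonneg_right hkey hwt0.le
  have habs : a * ‖wt‖ ≤ |a| * ‖wt‖ := mul_le_mul_of_nonneg_right (le_abs_self a) hwt0.le
  calc s * min ‖wt‖ (‖ws‖ * s / (alphac k * π)) ≤ s * (|a| * ‖wt‖) := by
        apply mul_le_mul_of_nonneg_left (le_trans hmin habs) hs0.le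
    _ = |a| * (s * ‖wt‖) := by ring
    _ = ‖a • wt + b • ws‖ * Real.sin (angle (a • wt + b • ws) ws) := by
        rw [hs, hθ, ← hcombo]; ring
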